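/- arXiv:0710.1350 — 2 statements merged into one kernel-verified Lean document; each statement's English description precedes it below -/
import Mathlib

section
/- With g as the inverse of G(t) = k(t) + t² (k convex, strictly increasing, continuous, k(0)=0), the function ρ(x, x̄) = max{‖x‖, g(|x̄|)} on H(1) satisfies ρ(p·q) ≤ ρ(p) + ρ(q) for all p, q ∈ H(1), and ρ(p) = 0 iff p = (0,0); hence ρ(p,q) := ρ(p⁻¹·q) is a left-invariant distance on H(1). (Kirchheim–Magnani, Theorem 2.1, existence part) -/
/-- The Heisenberg group H(1) as a set: ℝ² × ℝ. -/
abbrev H : Type := (ℝ × ℝ) × ℝ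

/-- Euclidean norm on ℝ². -/
noncomputable def enorm2 (x : ℝ × ℝ) : ℝ := Real.sqrt (x.1 ^ 2 + x.2 ^ 2)

/-- Canonical symplectic form on ℝ². -/
def omega2 (x y : ℝ × ℝ) : ℝ := x.1 * y.2 - x.2 * y.1

/-- Heisenberg group operation. -/
def Hmul (p q : H) : H :=
  ((p.1.1 + q.1.1, p.1.2 + q.1.2), p.2 + q.2 + 2 * omega2 p.1 q.1)

/-- Heisenberg group inverse. -/
def Hinv (p : H) : H := ((-p.1.1, -p.1.2), -p.2)

/-- Neutral element. -/
def He : H := ((0, 0), 0)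

/-- The gauge d₀(x,x̄) = max {‖x‖, √|x̄|}. -/
noncomputable def d0 (p : H) : ℝ := max (enorm2 p.1) (Real.sqrt |p.2|)
/-- The function G(t) = k(t) + t², whose inverse is g. -/
def Ginv (k : ℝ → ℝ) (t : ℝ) : ℝ := k t + t ^ 2

/-- The gauge ρ₀(x,x̄) = max {‖x‖, g(|x̄|)}. -/
noncomputable def rho0 (g : ℝ → ℝ) (p : H) : ℝ := max (enorm2 p.1) (g |p.2|)

/-- The dilatations δ̄_ε(x,x̄) = (εx, sgn(x̄)·g⁻¹(ε·g(|x̄|))). -/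
noncomputable def bdil (k g : ℝ → ℝ) (ε : ℝ) (p : H) : H :=
  ((ε * p.1.1, ε * p.1.2), Real.sign p.2 * Ginv k (ε * g |p.2|))

/-- The usual anisotropic dilations δ_ε(x,x̄) = (εx, ε²x̄). -/
def hdil (ε : ℝ) (p : H) : H := ((ε * p.1.1, ε * p.1.2), ε ^ 2 * p.2)

lemma enorm2_nonneg (x : ℝ × ℝ) : 0 ≤ enorm2 x := Real.sqrt_nonneg _

lemma enorm2_tri (x y : ℝ × ℝ) : enorm2 (x.1 + y.1, x.2 + y.2) ≤ enorm2 x + enorm2 y := by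
  unfold enorm2
  set s1 := Real.sqrt (x.1 ^ 2 + x.2 ^ 2) with hs1
  set s2 := Real.sqrt (y.1 ^ 2 + y.2 ^ 2) with hs2
  have h1 : s1 ^ 2 = x.1 ^ 2 + x.2 ^ 2 := Real.sq_sqrt (by positivity)
  have h2 : s2 ^ 2 = y.1 ^ 2 + y.2 ^ 2 := Real.sq_sqrt (by positivity)
  have hn1 : 0 ≤ s1 := Real.sqrt_nonneg _
  have hn2 : 0 ≤ s2 := Real.sqrt_nonneg _
  have key : x.1 * y.1 + x.2 * y.2 ≤ s1 * s2 := by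
    nlinarith [sq_nonneg (x.1 * y.2 - x.2 * y.1), sq_nonneg (s1 * s2 - (x.1 * y.1 + x.2 * y.2)),
      mul_nonneg hn1 hn2, sq_nonneg (s1 * s2 + (x.1 * y.1 + x.2 * y.2))]
  have : ((x.1 + y.1) ^ 2 + (x.2 + y.2) ^ 2) ≤ (s1 + s2) ^ 2 := by nlinarith
  calc Real.sqrt ((x.1 + y.1) ^ 2 + (x.2 + y.2) ^ 2) ≤ Real.sqrt ((s1 + s2) ^ 2) :=
        Real.sqrt_le_sqrt this
    _ = s1 + s2 := Real.sqrt_sq (by positivity)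

lemma omega_bound (x y : ℝ × ℝ) : |omega2 x y| ≤ enorm2 x * enorm2 y := by
  unfold omega2 enorm2
  set s1 := Real.sqrt (x.1 ^ 2 + x.2 ^ 2) with hs1
  set s2 := Real.sqrt (y.1 ^ 2 + y.2 ^ 2) with hs2
  have h1 : s1 ^ 2 = x.1 ^ 2 + x.2 ^ 2 := Real.sq_sqrt (by positivity)
  have h2 : s2 ^ 2 = y.1 ^ 2 + y.2 ^ 2 := Real.sq_sqrt (by positivity)
  have hn1 : 0 ≤ s1 := Real.sqrt_nonneg _
  have hn2 : 0 ≤ s2 := Real.sqrt_nonneg _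
  rw [abs_le]
  constructor <;> nlinarith [sq_nonneg (x.1 * y.1 + x.2 * y.2), mul_nonneg hn1 hn2,
    sq_nonneg (s1 * s2 - (x.1 * y.2 - x.2 * y.1)), sq_nonneg (s1 * s2 + (x.1 * y.2 - x.2 * y.1))]

lemma enorm2_zero_iff (x : ℝ × ℝ) : enorm2 x = 0 ↔ x = 0 := by
  unfold enorm2
  constructor
  · intro h
    have h2 : x.1 ^ 2 + x.2 ^ 2 = 0 := by
      have h' : x.1 ^ 2 + x.2 ^ 2 ≤ 0 := Real.sqrt_eq_zero'.mp h
      nlinarith [sq_nonneg x.1, sq_nonneg x.2]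
    have : x.1 = 0 ∧ x.2 = 0 := by constructor <;> nlinarith [sq_nonneg x.1, sq_nonneg x.2]
    exact Prod.ext this.1 this.2
  · rintro rfl; simp

/-- Kirchheim–Magnani, existence part: ρ₀ is subadditive for the
Heisenberg operation, vanishes exactly at the identity, and hence
ρ(p,q) := ρ₀(p⁻¹·q) is a left-invariant distance on H(1). -/
theorem rho0_gauge
(k g : ℝ → ℝ)
    (hk_conv : ConvexOn ℝ (Set.Ici 0) k)
    (hk_mono : StrictMonoOn k (Set.Ici 0))
    (hk_cont : ContinuousOn k (Set.Ici 0))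
    (hk0 : k 0 = 0)
    (hk_nonneg : ∀ t ∈ Set.Ici (0:ℝ), 0 ≤ k t)
    (hg_left : ∀ s ∈ Set.Ici (0:ℝ), g (Ginv k s) = s)
    (hg_right : ∀ t ∈ Set.Ici (0:ℝ), 0 ≤ g t ∧ Ginv k (g t) = t)
    :
    (∀ p q : H, rho0 g (Hmul p q) ≤ rho0 g p + rho0 g q) ∧
    (∀ p : H, rho0 g p = 0 ↔ p = He) ∧
    (∀ r p q : H, rho0 g (Hmul (Hinv (Hmul r p)) (Hmul r q)) = rho0 g (Hmul (Hinv p) q)) := by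
  -- Ginv is strictly monotone on [0,∞)
  have hGinv_mono : ∀ u ∈ Set.Ici (0:ℝ), ∀ v ∈ Set.Ici (0:ℝ), u < v → Ginv k u < Ginv k v := by
    intro u hu v hv huv
    have h1 := hk_mono hu hv huv
    have hu' : (0:ℝ) ≤ u := Set.mem_Ici.mp hu
    have h2 : u ^ 2 ≤ v ^ 2 := by nlinarith
    unfold Ginv
    linarith
  -- g is monotone on [0,∞)
  have hg_mono : ∀ t₁ t₂ : ℝ, 0 ≤ t₁ → t₁ ≤ t₂ → g t₁ ≤ g t₂ := by
    intro t₁ t₂ h1 h12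
    by_contra hlt
    push_neg at hlt
    have hg2 := hg_right t₂ (by exact le_trans h1 h12)
    have hg1 := hg_right t₁ h1
    have := hGinv_mono (g t₂) hg2.1 (g t₁) hg1.1 hlt
    rw [hg1.2, hg2.2] at this
    linarith
  -- k superadditive
  have hk_super : ∀ a b : ℝ, 0 ≤ a → 0 ≤ b → k a + k b ≤ k (a + b) := by
    intro a b ha hb
    rcases eq_or_lt_of_le (by linarith : (0:ℝ) ≤ a + b) with hs | hs
    · have ha0 : a = 0 := by linarith
      have hb0 : b = 0 := by linarith
      simp [ha0, hb0, hk0]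
    · set s := a + b with hsdef
      have hsne : s ≠ 0 := ne_of_gt hs
      have hsum : a / s + b / s = 1 := by
        rw [← add_div, ← hsdef, div_self hsne]
      have hsum' : b / s + a / s = 1 := by rw [add_comm]; exact hsum
      have h1 : k a ≤ a / s * k s := by
        have := hk_conv.2 (Set.mem_Ici.mpr (le_refl (0:ℝ))) (Set.mem_Ici.mpr hs.le)
          (by positivity : (0:ℝ) ≤ b / s) (by positivity : (0:ℝ) ≤ a / s) hsum'
        simp only [smul_eq_mul, mul_zero, zero_add] at this
        have hrw : a / s * s = a := by field_simp
        rw [hrw, hk0, mul_zero, zero_add] at this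
        exact this
      have h2 : k b ≤ b / s * k s := by
        have := hk_conv.2 (Set.mem_Ici.mpr (le_refl (0:ℝ))) (Set.mem_Ici.mpr hs.le)
          (by positivity : (0:ℝ) ≤ a / s) (by positivity : (0:ℝ) ≤ b / s) hsum
        simp only [smul_eq_mul, mul_zero, zero_add] at this
        have hrw : b / s * s = b := by field_simp
        rw [hrw, hk0, mul_zero, zero_add] at this
        exact this
      have h3 : a / s * k s + b / s * k s = k s := by
        rw [← add_mul, hsum, one_mul]
      linarith
  have hg0 : g 0 = 0 := by
    have := hg_left 0 (Set.mem_Ici.mpr (le_refl 0))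
    simpa [Ginv, hk0] using this
  refine ⟨?_, ?_, ?_⟩
  · -- subadditivity
    intro p q
    set α := rho0 g p with hα
    set β := rho0 g q with hβ
    have hαn : enorm2 p.1 ≤ α := le_max_left _ _
    have hαg : g |p.2| ≤ α := le_max_right _ _
    have hβn : enorm2 q.1 ≤ β := le_max_left _ _
    have hβg : g |q.2| ≤ β := le_max_right _ _
    have hα0 : 0 ≤ α := le_trans (enorm2_nonneg _) hαn
    have hβ0 : 0 ≤ β := le_trans (enorm2_nonneg _) hβn
    have ha := hg_right |p.2| (Set.mem_Ici.mpr (abs_nonneg _))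
    have hb := hg_right |q.2| (Set.mem_Ici.mpr (abs_nonneg _))
    set a := g |p.2| with hadef
    set b := g |q.2| with hbdef
    unfold rho0 Hmul
    apply max_le
    · exact le_trans (enorm2_tri p.1 q.1) (add_le_add hαn hβn)
    · -- g |z| ≤ α + β
      have hz : |p.2 + q.2 + 2 * omega2 p.1 q.1| ≤ Ginv k (α + β) := by
        have h1 : |p.2 + q.2 + 2 * omega2 p.1 q.1| ≤ |p.2| + |q.2| + 2 * |omega2 p.1 q.1| := by
          calc _ ≤ |p.2 + q.2| + |2 * omega2 p.1 q.1| := abs_add_le _ _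
            _ ≤ |p.2| + |q.2| + 2 * |omega2 p.1 q.1| := by
                rw [abs_mul, abs_two]; linarith [abs_add_le p.2 q.2]
        have h2 : |omega2 p.1 q.1| ≤ α * β :=
          le_trans (omega_bound p.1 q.1)
            (mul_le_mul hαn hβn (enorm2_nonneg _) hα0)
        have h3 : |p.2| = k a + a ^ 2 := by rw [← ha.2]; rfl
        have h4 : |q.2| = k b + b ^ 2 := by rw [← hb.2]; rfl
        have h5 : k a ≤ k α := by
          rcases eq_or_lt_of_le hαg with h | h
          · rw [h]
          · exact (hk_mono ha.1 (Set.mem_Ici.mpr hα0) h).le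
        have h6 : k b ≤ k β := by
          rcases eq_or_lt_of_le hβg with h | h
          · rw [h]
          · exact (hk_mono hb.1 (Set.mem_Ici.mpr hβ0) h).le
        have h7 : a ^ 2 ≤ α ^ 2 := by nlinarith [ha.1]
        have h8 : b ^ 2 ≤ β ^ 2 := by nlinarith [hb.1]
        have h9 : k α + k β ≤ k (α + β) := hk_super α β hα0 hβ0
        unfold Ginv
        nlinarith
      calc g |p.2 + q.2 + 2 * omega2 p.1 q.1| ≤ g (Ginv k (α + β)) :=
            hg_mono _ _ (abs_nonneg _) hz
        _ = α + β := hg_left _ (Set.mem_Ici.mpr (by linarith))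
  · -- zero iff identity
    intro p
    constructor
    · intro h
      have hn : enorm2 p.1 = 0 :=
        le_antisymm (h ▸ le_max_left _ _) (enorm2_nonneg _)
      have hgz : g |p.2| = 0 := by
        have h1 : g |p.2| ≤ 0 := h ▸ le_max_right _ _
        exact le_antisymm h1 (hg_right |p.2| (Set.mem_Ici.mpr (abs_nonneg _))).1
      have hp2 : |p.2| = 0 := by
        have := (hg_right |p.2| (Set.mem_Ici.mpr (abs_nonneg _))).2
        rw [hgz] at this
        simpa [Ginv, hk0] using this.symm
      have h1 : p.1 = 0 := (enorm2_zero_iff p.1).mp hn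
      have h2 : p.2 = 0 := abs_eq_zero.mp hp2
      show p = He
      unfold He
      exact Prod.ext (h1.trans rfl) h2
    · rintro rfl
      unfold rho0 He enorm2
      simp [hg0]
  · -- left invariance
    intro r p q
    have heq : Hmul (Hinv (Hmul r p)) (Hmul r q) = Hmul (Hinv p) q := by
      unfold Hmul Hinv omega2
      refine Prod.ext (Prod.ext ?_ ?_) ?_ <;> simp <;> ring
    rw [heq]
end

section
/- Suppose the limit β̄(x, y) = lim_{ε→0⁺} δ̄_{ε⁻¹}(δ̄_ε(x)·δ̄_ε(y)) exists for all x, y ∈ H(1), uniformly on compacts. Then for every ū ≥ 0 the limit A(ū) = lim_{ε→0⁺} (1/ε)·g(ε²·ū) exists, uniformly for ū in compact subsets of [0,∞). Consequently the identity map from (H(1), d) to (H(1), ρ) is metrically differentiable everywhere. -/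
set_option maxHeartbeats 1000000 in
/-- if axiom A4 holds for (H(1),ρ,δ̄) then the limit
A(ū) = lim_{ε→0⁺} (1/ε)·g(ε²ū) exists uniformly on compact subsets of [0,∞),
and consequently id : (H(1),d) → (H(1),ρ) is metrically differentiable
everywhere. -/
theorem A4_implies_metric_differentiability
(k g : ℝ → ℝ)
    (hk_conv : ConvexOn ℝ (Set.Ici 0) k)
    (hk_mono : StrictMonoOn k (Set.Ici 0))
    (hk_cont : ContinuousOn k (Set.Ici 0))
    (hk0 : k 0 = 0)
    (hk_nonneg : ∀ t ∈ Set.Ici (0:ℝ), 0 ≤ k t)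
    (hg_left : ∀ s ∈ Set.Ici (0:ℝ), g (Ginv k s) = s)
    (hg_right : ∀ t ∈ Set.Ici (0:ℝ), 0 ≤ g t ∧ Ginv k (g t) = t)
    (β : H → H → H)
    (hA4 : ∀ K : Set H, IsCompact K → ∀ η : ℝ, 0 < η → ∃ ε₀ : ℝ, 0 < ε₀ ∧
      ∀ ε : ℝ, 0 < ε → ε < ε₀ → ∀ x ∈ K, ∀ y ∈ K,
        ‖bdil k g ε⁻¹ (Hmul (bdil k g ε x) (bdil k g ε y)) - β x y‖ < η) :
    ∃ A : ℝ → ℝ,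
      (∀ C : Set ℝ, C ⊆ Set.Ici 0 → IsCompact C → ∀ η : ℝ, 0 < η →
        ∃ ε₀ : ℝ, 0 < ε₀ ∧ ∀ ε : ℝ, 0 < ε → ε < ε₀ → ∀ u ∈ C,
          |(1 / ε) * g (ε ^ 2 * u) - A u| < η) ∧
      (∀ x : H, ∃ η : H → ℝ,
        (∀ ε : ℝ, 0 < ε → ∀ v : H, η (hdil ε v) = ε * η v) ∧
        (∀ v w : H, η (Hmul v w) ≤ η v + η w) ∧
        (∀ K : Set H, IsCompact K → ∀ τ : ℝ, 0 < τ → ∃ ε₀ : ℝ, 0 < ε₀ ∧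
          ∀ ε : ℝ, 0 < ε → ε < ε₀ → ∀ v ∈ K,
            |(1 / ε) * rho0 g (Hmul (Hinv x) (Hmul x (hdil ε v))) - η v| < τ)) := by
  -- ### basic facts about g
  have hGinv0 : Ginv k 0 = 0 := by simp [Ginv, hk0]
  have hg0 : g 0 = 0 := by
    have := hg_left 0 Set.self_mem_Ici
    rwa [hGinv0] at this
  have hgnn : ∀ t, 0 ≤ t → 0 ≤ g t := fun t ht => (hg_right t ht).1
  have hGnn : ∀ y, 0 ≤ y → 0 ≤ Ginv k y := by
    intro y hy
    have := hk_nonneg y hy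
    have h2 : 0 ≤ y ^ 2 := sq_nonneg y
    simp only [Ginv]; linarith
  have hGmono : StrictMonoOn (Ginv k) (Set.Ici 0) := by
    intro p hp q hq hpq
    have h1 := hk_mono hp hq hpq
    have h2 : p ^ 2 ≤ q ^ 2 := pow_le_pow_left₀ hp hpq.le 2
    simp only [Ginv]; linarith
  have hg_le_sqrt : ∀ t, 0 ≤ t → g t ≤ Real.sqrt t := by
    intro t ht
    have h1 := (hg_right t ht).2
    have h2 : (g t) ^ 2 ≤ t := by
      have h3 := hk_nonneg (g t) (hgnn t ht)
      simp only [Ginv] at h1; linarith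
    exact (Real.le_sqrt (hgnn t ht) ht).2 h2
  -- ### Extracting the limit value from A4
  set a : ℝ := Real.sqrt (1/2) with ha_def
  have ha2 : a ^ 2 = 1/2 := Real.sq_sqrt (by norm_num)
  set x₀ : H := ((a, 0), 0) with hx₀
  set y₀ : H := ((0, a), 0) with hy₀
  set M : ℝ := (β x₀ y₀).2 with hM_def
  set φ : ℝ → ℝ := fun ε => ε⁻¹ * g (ε ^ 2) with hφ_def
  have hφnn : ∀ ε : ℝ, 0 < ε → 0 ≤ φ ε := by
    intro ε hε
    exact mul_nonneg (inv_nonneg.2 hε.le) (hgnn _ (sq_nonneg ε))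
  have hφ_le_one : ∀ ε : ℝ, 0 < ε → φ ε ≤ 1 := by
    intro ε hε
    have h1 : g (ε ^ 2) ≤ ε := by
      have := hg_le_sqrt (ε ^ 2) (sq_nonneg ε)
      rwa [Real.sqrt_sq hε.le] at this
    have h2 : ε⁻¹ * g (ε ^ 2) ≤ ε⁻¹ * ε :=
      mul_le_mul_of_nonneg_left h1 (inv_nonneg.2 hε.le)
    rw [inv_mul_cancel₀ hε.ne'] at h2
    exact h2
  have hcomp : ∀ ε : ℝ, 0 < ε →
      bdil k g ε⁻¹ (Hmul (bdil k g ε x₀) (bdil k g ε y₀)) = ((a, a), Ginv k (φ ε)) := by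
    intro ε hε
    have h1 : bdil k g ε x₀ = ((ε * a, 0), 0) := by
      simp [bdil, hx₀]
    have h2 : bdil k g ε y₀ = ((0, ε * a), 0) := by
      simp [bdil, hy₀]
    rw [h1, h2]
    have h3 : Hmul ((ε * a, 0), 0) ((0, ε * a), 0) = ((ε * a, ε * a), ε ^ 2) := by
      simp only [Hmul, omega2, Prod.mk.injEq]
      refine ⟨⟨by ring, by ring⟩, ?_⟩
      nlinarith [ha2]
    rw [h3]
    have hsq : (0:ℝ) < ε ^ 2 := pow_pos hε 2
    simp only [bdil, Real.sign_of_pos hsq, abs_of_pos hsq, one_mul, Prod.mk.injEq]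
    exact ⟨⟨by field_simp, by field_simp⟩, rfl⟩
  have hF : ∀ η : ℝ, 0 < η → ∃ ε₀ : ℝ, 0 < ε₀ ∧
      ∀ ε : ℝ, 0 < ε → ε < ε₀ → |Ginv k (φ ε) - M| < η := by
    intro η hη
    have hKc : IsCompact ({x₀, y₀} : Set H) :=
      ((Set.finite_singleton y₀).insert x₀).isCompact
    obtain ⟨ε₀, hε₀, hb⟩ := hA4 {x₀, y₀} hKc η hη
    refine ⟨ε₀, hε₀, fun ε hε hεlt => ?_⟩
    have hb2 := hb ε hε hεlt x₀ (by simp) y₀ (by simp)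
    rw [hcomp ε hε] at hb2
    have h5 : |(((a, a), Ginv k (φ ε)) - β x₀ y₀ : H).2| ≤ ‖(((a, a), Ginv k (φ ε)) - β x₀ y₀ : H)‖ := by
      simpa [Real.norm_eq_abs] using norm_snd_le (((a, a), Ginv k (φ ε)) - β x₀ y₀ : H)
    simp only [Prod.snd_sub] at h5
    exact lt_of_le_of_lt h5 hb2
  have hM0 : 0 ≤ M := by
    by_contra h
    push_neg at h
    obtain ⟨ε₀, hε₀, hb⟩ := hF (-M) (by linarith)
    have hb2 := hb (ε₀/2) (by linarith) (by linarith)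
    have h3 : 0 ≤ Ginv k (φ (ε₀/2)) := hGnn _ (hφnn _ (by linarith))
    rw [abs_lt] at hb2
    linarith [hb2.2]
  set L : ℝ := g M with hL_def
  have hL0 : 0 ≤ L := hgnn M hM0
  have hGL : Ginv k L = M := (hg_right M hM0).2
  -- continuity of g at M, quantitatively
  have hGcont : ∀ η' : ℝ, 0 < η' → ∃ η > 0, ∀ y : ℝ, 0 ≤ y →
      |Ginv k y - M| < η → |y - L| < η' := by
    intro η' hη'
    have hmem : ∀ t : ℝ, 0 ≤ t → t ∈ Set.Ici (0:ℝ) := fun t ht => ht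
    have hη₁ : 0 < Ginv k (L + η') - M := by
      have := hGmono (hmem L hL0) (hmem (L + η') (by linarith)) (by linarith)
      rw [hGL] at this; linarith
    by_cases hse : η' ≤ L
    · have hη₂ : 0 < M - Ginv k (L - η') := by
        have := hGmono (hmem (L - η') (by linarith)) (hmem L hL0) (by linarith)
        rw [hGL] at this; linarith
      refine ⟨min (Ginv k (L + η') - M) (M - Ginv k (L - η')), lt_min hη₁ hη₂, ?_⟩
      intro y hy hlt
      rw [abs_lt] at hlt ⊢
      constructor
      · by_contra hc
        push_neg at hc
        have hc' : y ≤ L - η' := by linarith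
        have h4 : Ginv k y ≤ Ginv k (L - η') := by
          rcases lt_or_eq_of_le hc' with h | h
          · exact (hGmono (hmem y hy) (hmem (L - η') (by linarith)) h).le
          · rw [h]
        have := hlt.1
        have h5 := min_le_right (Ginv k (L + η') - M) (M - Ginv k (L - η'))
        linarith
      · by_contra hc
        push_neg at hc
        have hc' : L + η' ≤ y := by linarith
        have h4 : Ginv k (L + η') ≤ Ginv k y := by
          rcases lt_or_eq_of_le hc' with h | h
          · exact (hGmono (hmem (L + η') (by linarith)) (hmem y hy) h).le
          · rw [h]
        have := hlt.2
        have h5 := min_le_left (Ginv k (L + η') - M) (M - Ginv k (L - η'))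
        linarith
    · push_neg at hse
      refine ⟨Ginv k (L + η') - M, hη₁, ?_⟩
      intro y hy hlt
      rw [abs_lt] at hlt ⊢
      constructor
      · linarith
      · by_contra hc
        push_neg at hc
        have hc' : L + η' ≤ y := by linarith
        have h4 : Ginv k (L + η') ≤ Ginv k y := by
          rcases lt_or_eq_of_le hc' with h | h
          · exact (hGmono (hmem (L + η') (by linarith)) (hmem y hy) h).le
          · rw [h]
        linarith [hlt.2]
  have hφlim : ∀ η' : ℝ, 0 < η' → ∃ ε₀ : ℝ, 0 < ε₀ ∧
      ∀ ε : ℝ, 0 < ε → ε < ε₀ → |φ ε - L| < η' := by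
    intro η' hη'
    obtain ⟨η, hη, hcont⟩ := hGcont η' hη'
    obtain ⟨ε₀, hε₀, hb⟩ := hF η hη
    exact ⟨ε₀, hε₀, fun ε hε hεlt => hcont (φ ε) (hφnn ε hε) (hb ε hε hεlt)⟩
  have hL1 : L ≤ 1 := by
    by_contra h
    push_neg at h
    obtain ⟨ε₀, hε₀, hb⟩ := hφlim (L - 1) (by linarith)
    have hb2 := hb (ε₀/2) (by linarith) (by linarith)
    rw [abs_lt] at hb2
    linarith [hφ_le_one (ε₀/2) (by linarith), hb2.1]
  -- ### Part 1: uniform convergence on compacts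
  have key : ∀ C : Set ℝ, C ⊆ Set.Ici 0 → IsCompact C → ∀ η : ℝ, 0 < η →
      ∃ ε₀ : ℝ, 0 < ε₀ ∧ ∀ ε : ℝ, 0 < ε → ε < ε₀ → ∀ u ∈ C,
        |(1 / ε) * g (ε ^ 2 * u) - L * Real.sqrt u| < η := by
    intro C hC0 hC η hη
    rcases C.eq_empty_or_nonempty with rfl | hne
    · exact ⟨1, one_pos, by simp⟩
    obtain ⟨m, hmC, hmax⟩ := hC.exists_isMaxOn hne continuousOn_id
    have hm0 : (0:ℝ) ≤ m := hC0 hmC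
    set R : ℝ := Real.sqrt m + 1 with hR
    have hR0 : 0 < R := by positivity
    obtain ⟨ε₁, hε₁, hφ₁⟩ := hφlim (η / R) (by positivity)
    refine ⟨ε₁ / R, by positivity, ?_⟩
    intro ε hε hεlt u huC
    have hu0 : (0:ℝ) ≤ u := hC0 huC
    rcases eq_or_lt_of_le hu0 with rfl | hu
    · simp [hg0, hη]
    · have hsu : 0 < Real.sqrt u := Real.sqrt_pos.2 hu
      have hsuR : Real.sqrt u < R := by
        have h1 : Real.sqrt u ≤ Real.sqrt m := Real.sqrt_le_sqrt (hmax huC)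
        linarith
      have h1 : ε * Real.sqrt u < ε₁ := by
        calc ε * Real.sqrt u < (ε₁ / R) * R := by
              apply mul_lt_mul' hεlt.le hsuR hsu.le (by positivity)
          _ = ε₁ := by field_simp
      have h2 := hφ₁ (ε * Real.sqrt u) (by positivity) h1
      have h3 : (ε * Real.sqrt u) ^ 2 = ε ^ 2 * u := by
        rw [mul_pow, Real.sq_sqrt hu0]
      have h4 : (1 / ε) * g (ε ^ 2 * u) - L * Real.sqrt u
          = Real.sqrt u * (φ (ε * Real.sqrt u) - L) := by
        simp only [hφ_def, h3]
        field_simp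
      rw [h4, abs_mul, abs_of_nonneg hsu.le]
      calc Real.sqrt u * |φ (ε * Real.sqrt u) - L| ≤ R * |φ (ε * Real.sqrt u) - L| :=
            mul_le_mul_of_nonneg_right hsuR.le (abs_nonneg _)
        _ < R * (η / R) := by exact mul_lt_mul_of_pos_left h2 hR0
        _ = η := by field_simp
  -- ### geometric lemmas about enorm2 and omega2
  have henn : ∀ x : ℝ × ℝ, 0 ≤ enorm2 x := fun x => Real.sqrt_nonneg _
  have hesq : ∀ x : ℝ × ℝ, (enorm2 x) ^ 2 = x.1 ^ 2 + x.2 ^ 2 :=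
    fun x => Real.sq_sqrt (by positivity)
  have htri : ∀ x y : ℝ × ℝ, enorm2 (x.1 + y.1, x.2 + y.2) ≤ enorm2 x + enorm2 y := by
    intro x y
    have hA0 := henn x
    have hB0 := henn y
    have hA2 := hesq x
    have hB2 := hesq y
    have hcs : x.1 * y.1 + x.2 * y.2 ≤ enorm2 x * enorm2 y := by
      nlinarith [sq_nonneg (x.1 * y.2 - x.2 * y.1),
        sq_nonneg (enorm2 x * enorm2 y - x.1 * y.1 - x.2 * y.2), mul_nonneg hA0 hB0]
    have h1 : (x.1 + y.1) ^ 2 + (x.2 + y.2) ^ 2 ≤ (enorm2 x + enorm2 y) ^ 2 := by nlinarith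
    calc enorm2 (x.1 + y.1, x.2 + y.2) ≤ Real.sqrt ((enorm2 x + enorm2 y) ^ 2) :=
          Real.sqrt_le_sqrt h1
      _ = enorm2 x + enorm2 y := Real.sqrt_sq (by positivity)
  have homega : ∀ x y : ℝ × ℝ, |omega2 x y| ≤ enorm2 x * enorm2 y := by
    intro x y
    have hA0 := henn x
    have hB0 := henn y
    have hA2 := hesq x
    have hB2 := hesq y
    rw [abs_le]
    constructor
    · simp only [omega2]
      nlinarith [sq_nonneg (x.1 * y.1 + x.2 * y.2),
        sq_nonneg (enorm2 x * enorm2 y + x.1 * y.2 - x.2 * y.1), mul_nonneg hA0 hB0]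
    · simp only [omega2]
      nlinarith [sq_nonneg (x.1 * y.1 + x.2 * y.2),
        sq_nonneg (enorm2 x * enorm2 y - x.1 * y.2 + x.2 * y.1), mul_nonneg hA0 hB0]
  have hsmul : ∀ (ε : ℝ) (x : ℝ × ℝ), 0 ≤ ε → enorm2 (ε * x.1, ε * x.2) = ε * enorm2 x := by
    intro ε x hε
    simp only [enorm2]
    rw [show (ε * x.1) ^ 2 + (ε * x.2) ^ 2 = ε ^ 2 * (x.1 ^ 2 + x.2 ^ 2) by ring,
      Real.sqrt_mul (sq_nonneg ε), Real.sqrt_sq hε]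
  -- ### conclusion
  refine ⟨fun u => L * Real.sqrt u, key, ?_⟩
  intro x
  refine ⟨fun v => max (enorm2 v.1) (L * Real.sqrt |v.2|), ?_, ?_, ?_⟩
  · -- homogeneity
    intro ε hε v
    show max (enorm2 (hdil ε v).1) (L * Real.sqrt |(hdil ε v).2|)
        = ε * max (enorm2 v.1) (L * Real.sqrt |v.2|)
    have h1 : enorm2 (hdil ε v).1 = ε * enorm2 v.1 := hsmul ε v.1 hε.le
    have h2 : Real.sqrt |(hdil ε v).2| = ε * Real.sqrt |v.2| := by
      simp only [hdil]
      rw [abs_mul, abs_of_pos (pow_pos hε 2), Real.sqrt_mul (sq_nonneg ε),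
        Real.sqrt_sq hε.le]
    rw [h1, h2]
    rw [show L * (ε * Real.sqrt |v.2|) = ε * (L * Real.sqrt |v.2|) by ring]
    rw [← mul_max_of_nonneg _ _ hε.le]
  · -- subadditivity
    intro v w
    set nv := enorm2 v.1
    set nw := enorm2 w.1
    set sv := L * Real.sqrt |v.2| with hsv_def
    set sw := L * Real.sqrt |w.2| with hsw_def
    set a' := max nv sv with ha'
    set b' := max nw sw with hb'
    have hnv : nv ≤ a' := le_max_left _ _
    have hnw : nw ≤ b' := le_max_left _ _
    have hsv : sv ≤ a' := le_max_right _ _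
    have hsw : sw ≤ b' := le_max_right _ _
    have hnv0 : 0 ≤ nv := henn _
    have hnw0 : 0 ≤ nw := henn _
    have ha0 : 0 ≤ a' := le_trans hnv0 hnv
    have hb0 : 0 ≤ b' := le_trans hnw0 hnw
    apply max_le
    · calc enorm2 (Hmul v w).1 = enorm2 (v.1.1 + w.1.1, v.1.2 + w.1.2) := rfl
        _ ≤ nv + nw := htri v.1 w.1
        _ ≤ a' + b' := add_le_add hnv hnw
    · have hT : |(Hmul v w).2| ≤ |v.2| + |w.2| + 2 * (nv * nw) := by
        simp only [Hmul]
        calc |v.2 + w.2 + 2 * omega2 v.1 w.1| ≤ |v.2| + |w.2| + |2 * omega2 v.1 w.1| := by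
              have := abs_add_le (v.2 + w.2) (2 * omega2 v.1 w.1)
              have := abs_add_le v.2 w.2
              linarith
          _ ≤ |v.2| + |w.2| + 2 * (nv * nw) := by
              rw [abs_mul, abs_two]
              have := homega v.1 w.1
              linarith
      have hsv2 : L ^ 2 * |v.2| ≤ a' ^ 2 := by
        have h1 : sv ^ 2 = L ^ 2 * |v.2| := by
          rw [hsv_def, mul_pow, Real.sq_sqrt (abs_nonneg _)]
        have h2 : sv ^ 2 ≤ a' ^ 2 := pow_le_pow_left₀ (by positivity) hsv 2
        linarith
      have hsw2 : L ^ 2 * |w.2| ≤ b' ^ 2 := by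
        have h1 : sw ^ 2 = L ^ 2 * |w.2| := by
          rw [hsw_def, mul_pow, Real.sq_sqrt (abs_nonneg _)]
        have h2 : sw ^ 2 ≤ b' ^ 2 := pow_le_pow_left₀ (by positivity) hsw 2
        linarith
      have hL2 : L ^ 2 ≤ 1 := by nlinarith
      have hprod : nv * nw ≤ a' * b' := mul_le_mul hnv hnw hnw0 ha0
      have hmain : L ^ 2 * |(Hmul v w).2| ≤ (a' + b') ^ 2 := by
        have h1 : L ^ 2 * |(Hmul v w).2| ≤ L ^ 2 * (|v.2| + |w.2| + 2 * (nv * nw)) :=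
          mul_le_mul_of_nonneg_left hT (sq_nonneg L)
        have h2 : L ^ 2 * (2 * (nv * nw)) ≤ 2 * (a' * b') := by
          have h3 : L ^ 2 * (nv * nw) ≤ 1 * (nv * nw) :=
            mul_le_mul_of_nonneg_right hL2 (mul_nonneg hnv0 hnw0)
          linarith [hprod]
        nlinarith [hsv2, hsw2]
      calc L * Real.sqrt |(Hmul v w).2| = Real.sqrt (L ^ 2 * |(Hmul v w).2|) := by
            rw [Real.sqrt_mul (sq_nonneg L), Real.sqrt_sq hL0]
        _ ≤ Real.sqrt ((a' + b') ^ 2) := Real.sqrt_le_sqrt hmain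
        _ = a' + b' := Real.sqrt_sq (by positivity)
  · -- the limit
    intro K hK τ hτ
    have hfix : ∀ w : H, Hmul (Hinv x) (Hmul x w) = w := by
      intro w
      rw [Prod.ext_iff, Prod.ext_iff]
      refine ⟨⟨?_, ?_⟩, ?_⟩ <;> simp [Hmul, Hinv, omega2] <;> ring
    set C : Set ℝ := (fun v : H => |v.2|) '' K with hC_def
    have hCc : IsCompact C := hK.image (continuous_snd.abs)
    have hC0 : C ⊆ Set.Ici 0 := by
      rintro _ ⟨v, _, rfl⟩
      simpa using abs_nonneg v.2
    obtain ⟨ε₀, hε₀, hb⟩ := key C hC0 hCc τ hτ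
    refine ⟨ε₀, hε₀, ?_⟩
    intro ε hε hεlt v hvK
    rw [hfix]
    have h1 : rho0 g (hdil ε v) = max (ε * enorm2 v.1) (g (ε ^ 2 * |v.2|)) := by
      simp only [rho0, hdil]
      rw [hsmul ε v.1 hε.le, abs_mul, abs_of_pos (pow_pos hε 2)]
    rw [h1]
    have h2 : (1 / ε) * max (ε * enorm2 v.1) (g (ε ^ 2 * |v.2|))
        = max (enorm2 v.1) ((1 / ε) * g (ε ^ 2 * |v.2|)) := by
      rw [mul_max_of_nonneg _ _ (by positivity : (0:ℝ) ≤ 1 / ε)]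
      congr 1
      field_simp
    rw [h2]
    have h3 := hb ε hε hεlt |v.2| ⟨v, hvK, rfl⟩
    calc abs (max (enorm2 v.1) ((1 / ε) * g (ε ^ 2 * |v.2|)) - max (enorm2 v.1) (L * Real.sqrt |v.2|))
        = abs (max ((1 / ε) * g (ε ^ 2 * |v.2|)) (enorm2 v.1) - max (L * Real.sqrt |v.2|) (enorm2 v.1)) := by
          rw [max_comm (enorm2 v.1), max_comm (enorm2 v.1)]
      _ ≤ abs ((1 / ε) * g (ε ^ 2 * |v.2|) - L * Real.sqrt |v.2|) := abs_max_sub_max_le_abs _ _ _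
      _ < τ := h3
end
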